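/- arXiv:1208.4702 — 4 statements merged into one kernel-verified Lean document; each statement's English description precedes it below -/
import Mathlib

section
/- (Inclusion–exclusion for signatures) Let Ω̄ be a nonempty antichain of nonempty subsets of X = {1,...,n} and φ_Ω̄ the structure function with minimal cut sets Ω̄. Then for each i, N_i(φ_Ω̄) = Σ_{∅ ≠ Γ ⊆ Ω̄} (-1)^{|Γ|+1} N_i(φ*_{|∪Γ|}), where φ*_m is the structure function whose unique minimal cut set has cardinality m (say {1,...,m}), and ∪Γ is the union of the sets in Γ. -/
open Finset

/-- The set {σ(i), σ(i+1), ..., σ(n)} (1-based indexing) of the last components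
in the failure order σ. -/
def tailSet {n : ℕ} (σ : Equiv.Perm (Fin n)) (i : ℕ) : Finset (Fin n) :=
  (Finset.univ.filter (fun k : Fin n => i ≤ k.1 + 1)).image σ

/-- `Nperm n φ i` is the number of permutations of the n components whose
breakdown index is i. -/
def Nperm (n : ℕ) (φ : Finset (Fin n) → Bool) (i : ℕ) : ℕ :=
  (Finset.univ.filter (fun σ : Equiv.Perm (Fin n) =>
    φ (tailSet σ i) = true ∧ φ (tailSet σ (i + 1)) = false)).card

/-- The structure function induced by a family Ω of cut sets:
φ_Ω(A) = 0 iff X \ A contains some member of Ω. -/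
def phiOmega (n : ℕ) (Ω : Finset (Finset (Fin n))) : Finset (Fin n) → Bool :=
  fun A => decide (∀ C ∈ Ω, ¬ C ⊆ Aᶜ)

/-- The parallel-type system φ*_m with unique minimal cut set {1,...,m}. -/
def phiParallel (n m : ℕ) : Finset (Fin n) → Bool :=
  fun A => decide (∃ k ∈ A, k.1 < m)

/-- failure set D S j : permutations where S ⊆ (tailSet σ j)ᶜ -/

def Dset (n : ℕ) (S : Finset (Fin n)) (j : ℕ) : Finset (Equiv.Perm (Fin n)) :=
  Finset.univ.filter (fun σ => S ⊆ (tailSet σ j)ᶜ)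

lemma tailSet_mul {n : ℕ} (π σ : Equiv.Perm (Fin n)) (j : ℕ) :
    tailSet (π * σ) j = (tailSet σ j).image π := by
  simp [tailSet, Finset.image_image, Function.comp_def, Equiv.Perm.mul_apply]

lemma tailSet_succ_subset {n : ℕ} (σ : Equiv.Perm (Fin n)) (j : ℕ) :
    tailSet σ (j + 1) ⊆ tailSet σ j :=
  Finset.image_subset_image (by
    apply Finset.monotone_filter_right
    intro k hk; omega)

lemma Dset_card_eq {n : ℕ} {S S' : Finset (Fin n)} (h : S.card = S'.card) (j : ℕ) :
    (Dset n S j).card = (Dset n S' j).card := by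
  classical
  have e1 : {x : Fin n // x ∈ S} ≃ {x : Fin n // x ∈ S'} := by
    apply Fintype.equivOfCardEq; simpa using h
  have e2 : {x : Fin n // ¬ x ∈ S} ≃ {x : Fin n // ¬ x ∈ S'} := by
    apply Fintype.equivOfCardEq
    rw [Fintype.card_subtype_compl, Fintype.card_subtype_compl]
    simp [h]
  set π : Equiv.Perm (Fin n) := Equiv.subtypeCongr e1 e2 with hπ
  have hmem : ∀ k : Fin n, k ∈ S ↔ π k ∈ S' := by
    intro k
    by_cases hk : k ∈ S
    · have : π k = (e1 ⟨k, hk⟩ : Fin n) := by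
        simp [hπ, Equiv.subtypeCongr, hk]
      rw [this]; simp [hk, (e1 ⟨k, hk⟩).2]
    · have : π k = (e2 ⟨k, hk⟩ : Fin n) := by
        simp [hπ, Equiv.subtypeCongr, hk]
      rw [this]; simp [hk, (e2 ⟨k, hk⟩).2]
  apply Finset.card_bij' (fun σ _ => π * σ) (fun σ _ => π⁻¹ * σ)
  · intro σ hσ
    simp only [Dset, Finset.mem_filter, Finset.mem_univ, true_and] at hσ ⊢
    rw [tailSet_mul]
    intro a ha
    have hπa : π⁻¹ a ∈ S := by
      rw [hmem]; simpa using ha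
    have := hσ hπa
    simp only [Finset.mem_compl] at this ⊢
    intro hc
    rcases Finset.mem_image.1 hc with ⟨b, hb, rfl⟩
    exact this (by simpa using hb)
  · intro σ hσ
    simp only [Dset, Finset.mem_filter, Finset.mem_univ, true_and] at hσ ⊢
    have : tailSet σ j = (tailSet (π⁻¹ * σ) j).image π := by
      rw [tailSet_mul]; simp [Finset.image_image, Function.comp_def]
    rw [this] at hσ
    intro a ha
    have hπa : π a ∈ S' := (hmem a).1 ha
    have := hσ hπa
    simp only [Finset.mem_compl] at this ⊢
    intro hc
    exact this (Finset.mem_image_of_mem π hc)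
  · intro σ _; group
  · intro σ _; group

/-- failure-set of a structure function at stage j -/

def Eset (n : ℕ) (φ : Finset (Fin n) → Bool) (j : ℕ) : Finset (Equiv.Perm (Fin n)) :=
  Finset.univ.filter (fun σ => φ (tailSet σ j) = false)

lemma Nperm_eq_sub {n : ℕ} {φ : Finset (Fin n) → Bool}
    (hmono : ∀ A B : Finset (Fin n), A ⊆ B → φ B = false → φ A = false) (i : ℕ) :
    (Nperm n φ i : ℤ) = (Eset n φ (i + 1)).card - (Eset n φ i).card := by
  have hsub : Eset n φ i ⊆ Eset n φ (i + 1) := by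
    intro σ hσ
    simp only [Eset, Finset.mem_filter, Finset.mem_univ, true_and] at hσ ⊢
    exact hmono _ _ (tailSet_succ_subset σ i) hσ
  have : Nperm n φ i = (Eset n φ (i + 1) \ Eset n φ i).card := by
    unfold Nperm
    congr 1
    ext σ
    simp only [Eset, Finset.mem_sdiff, Finset.mem_filter, Finset.mem_univ, true_and]
    constructor
    · rintro ⟨h1, h2⟩; exact ⟨h2, by simp [h1]⟩
    · rintro ⟨h1, h2⟩
      refine ⟨?_, h1⟩
      cases h : φ (tailSet σ i)
      · exact absurd h h2
      · rfl
  rw [this, Finset.card_sdiff_of_subset hsub]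
  have := Finset.card_le_card hsub
  omega

lemma phiOmega_mono {n : ℕ} (Ω : Finset (Finset (Fin n))) :
    ∀ A B : Finset (Fin n), A ⊆ B → phiOmega n Ω B = false → phiOmega n Ω A = false := by
  intro A B hAB h
  simp only [phiOmega, decide_eq_false_iff_not, not_forall] at h ⊢
  push_neg at h ⊢
  obtain ⟨C, hC, hCB⟩ := h
  exact ⟨C, hC, hCB.trans (Finset.compl_subset_compl.2 hAB)⟩

lemma phiParallel_mono {n m : ℕ} :
    ∀ A B : Finset (Fin n), A ⊆ B → phiParallel n m B = false → phiParallel n m A = false := by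
  intro A B hAB h
  simp only [phiParallel, decide_eq_false_iff_not, not_exists] at h ⊢
  push_neg at h ⊢
  exact fun k hk => h k (hAB hk)

lemma Eset_phiParallel {n m : ℕ} (j : ℕ) :
    Eset n (phiParallel n m) j = Dset n (Finset.univ.filter (fun k : Fin n => k.1 < m)) j := by
  ext σ
  simp only [Eset, Dset, Finset.mem_filter, Finset.mem_univ, true_and, phiParallel,
    decide_eq_false_iff_not]
  constructor
  · intro h x hx
    simp only [Finset.mem_filter, Finset.mem_univ, true_and] at hx
    simp only [Finset.mem_compl]
    exact fun hmem => h ⟨x, hmem, hx⟩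
  · rintro h ⟨k, hk, hlt⟩
    have hin : k ∈ Finset.univ.filter (fun k : Fin n => k.1 < m) := by
      simp [hlt]
    have := h hin
    simp only [Finset.mem_compl] at this
    exact this hk

lemma Eset_phiOmega {n : ℕ} (Ω : Finset (Finset (Fin n))) (j : ℕ) :
    Eset n (phiOmega n Ω) j = Ω.biUnion (fun C => Dset n C j) := by
  ext σ
  simp only [Eset, Dset, Finset.mem_biUnion, Finset.mem_filter, Finset.mem_univ, true_and,
    phiOmega, decide_eq_false_iff_not, not_forall]
  push_neg
  tauto

lemma inf'_Dset {n : ℕ} {Γ : Finset (Finset (Fin n))} (hΓ : Γ.Nonempty) (j : ℕ) :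
    Γ.inf' hΓ (fun C => Dset n C j) = Dset n (Γ.sup id) j := by
  apply le_antisymm
  · intro σ hσ
    have hall : ∀ C ∈ Γ, σ ∈ Dset n C j := fun C hC => Finset.inf'_le (fun C => Dset n C j) hC hσ
    simp only [Dset, Finset.mem_filter, Finset.mem_univ, true_and] at hall ⊢
    exact Finset.sup_le fun C hC => hall C hC
  · apply Finset.le_inf'
    intro C hC σ hσ
    simp only [Dset, Finset.mem_filter, Finset.mem_univ, true_and] at hσ ⊢
    exact (Finset.le_sup (f := id) hC).trans hσ

lemma card_filter_lt (n m : ℕ) (h : m ≤ n) :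
    (Finset.univ.filter (fun k : Fin n => k.1 < m)).card = m := by
  have : (Finset.univ.filter (fun k : Fin n => k.1 < m)) =
      (Finset.univ : Finset (Fin m)).image (Fin.castLE h) := by
    ext k
    simp only [Finset.mem_filter, Finset.mem_univ, true_and, Finset.mem_image]
    constructor
    · intro hk; exact ⟨⟨k.1, hk⟩, by ext; simp⟩
    · rintro ⟨a, rfl⟩; exact a.2
  rw [this, Finset.card_image_of_injective _ (Fin.castLE_injective h)]
  simp

lemma Eset_card_ie {n : ℕ} (Ω : Finset (Finset (Fin n))) (j : ℕ) :
    ((Eset n (phiOmega n Ω) j).card : ℤ) =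
      ∑ Γ ∈ Ω.powerset.filter (fun Γ => Γ ≠ ∅),
        (-1 : ℤ) ^ (Γ.card + 1) * ((Eset n (phiParallel n (Γ.sup id).card) j).card : ℤ) := by
  classical
  set g : Finset (Finset (Fin n)) → ℤ := fun Γ =>
    (-1 : ℤ) ^ (Γ.card + 1) * ((Eset n (phiParallel n (Γ.sup id).card) j).card : ℤ) with hg
  calc ((Eset n (phiOmega n Ω) j).card : ℤ)
      = ((Ω.biUnion (fun C => Dset n C j)).card : ℤ) := by rw [Eset_phiOmega]
    _ = ∑ t : (Ω.powerset.filter (·.Nonempty)),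
          (-1 : ℤ) ^ (t.1.card + 1) *
            ((t.1.inf' (Finset.mem_filter.1 t.2).2 (fun C => Dset n C j)).card : ℤ) :=
        Finset.inclusion_exclusion_card_biUnion Ω (fun C => Dset n C j)
    _ = ∑ t : (Ω.powerset.filter (·.Nonempty)), g t.1 := by
        apply Finset.sum_congr rfl
        intro t _
        have hne : t.1.Nonempty := (Finset.mem_filter.1 t.2).2
        have hsub : t.1 ⊆ Ω := Finset.mem_powerset.1 (Finset.mem_filter.1 t.2).1
        rw [inf'_Dset hne, hg]
        congr 2
        have hle : (t.1.sup id).card ≤ n := by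
          have := Finset.card_le_card (Finset.subset_univ (t.1.sup id))
          simpa using this
        rw [Eset_phiParallel]
        exact Dset_card_eq (card_filter_lt n _ hle).symm j
    _ = ∑ Γ ∈ Ω.powerset.filter (·.Nonempty), g Γ := Finset.sum_coe_sort _ g
    _ = ∑ Γ ∈ Ω.powerset.filter (fun Γ => Γ ≠ ∅), g Γ := by
        apply Finset.sum_congr _ (fun _ _ => rfl)
        apply Finset.filter_congr
        intro Γ _
        simp [Finset.nonempty_iff_ne_empty]

/-- Inclusion–exclusion for signatures: for the system with minimal cut sets Ω̄,
N_i(φ_Ω̄) = Σ_{∅ ≠ Γ ⊆ Ω̄} (-1)^{|Γ|+1} N_i(φ*_{|∪Γ|}). -/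
theorem signature_inclusion_exclusion (n : ℕ) (Ω : Finset (Finset (Fin n)))
    (hne : Ω.Nonempty) (hempty : ∅ ∉ Ω)
    (hanti : IsAntichain (· ⊆ ·) (↑Ω : Set (Finset (Fin n)))) :
    ∀ i : ℕ, (Nperm n (phiOmega n Ω) i : ℤ) =
      ∑ Γ ∈ Ω.powerset.filter (fun Γ => Γ ≠ ∅),
        (-1 : ℤ) ^ (Γ.card + 1) * Nperm n (phiParallel n (Γ.sup id).card) i := by
  intro i
  rw [Nperm_eq_sub (phiOmega_mono Ω) i, Eset_card_ie, Eset_card_ie, ← Finset.sum_sub_distrib]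
  apply Finset.sum_congr rfl
  intro Γ _
  rw [Nperm_eq_sub (phiParallel_mono) i]
  ring
end

section
/- For a monotone structure function φ on X = {1,...,n} with φ(∅)=0, φ(X)=1, the number of cut sets of φ of cardinality l equals C(n,l) · (s_1(φ) + ... + s_l(φ)), i.e., |{A ⊆ X : |A| = l, φ(X\A) = 0}| · (n-l)! · l! = N_1(φ) + ... + N_l(φ). -/
open Finset

lemma subtypeCongr_apply_mem {α} [DecidableEq α] {p q : α → Prop} [DecidablePred p] [DecidablePred q]
    (e : {x // p x} ≃ {x // q x}) (f : {x // ¬ p x} ≃ {x // ¬ q x}) (a : α) (h : p a) :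
    Equiv.subtypeCongr e f a = (e ⟨a, h⟩ : α) := by
  simp [Equiv.subtypeCongr, h]

lemma subtypeCongr_apply_notMem {α} [DecidableEq α] {p q : α → Prop} [DecidablePred p] [DecidablePred q]
    (e : {x // p x} ≃ {x // q x}) (f : {x // ¬ p x} ≃ {x // ¬ q x}) (a : α) (h : ¬ p a) :
    Equiv.subtypeCongr e f a = (f ⟨a, h⟩ : α) := by
  simp [Equiv.subtypeCongr, h]

lemma perm_image_card {n : ℕ} (T B : Finset (Fin n)) (h : T.card = B.card) :
    (univ.filter (fun σ : Equiv.Perm (Fin n) => T.image σ = B)).card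
      = T.card.factorial * (n - T.card).factorial := by
  have key : {σ : Equiv.Perm (Fin n) // T.image σ = B} ≃
      (({x // x ∈ T} ≃ {x // x ∈ B}) × ({x // x ∉ T} ≃ {x // x ∉ B})) := by
    have hmem : ∀ (σ : Equiv.Perm (Fin n)), T.image σ = B → ∀ x, x ∈ T ↔ σ x ∈ B := by
      intro σ hσ x
      subst hσ
      constructor
      · exact fun hx => Finset.mem_image_of_mem _ hx
      · intro hx
        obtain ⟨y, hy, hxy⟩ := Finset.mem_image.1 hx
        rwa [← σ.injective hxy]
    refine
      { toFun := fun σ => (σ.1.subtypeEquiv (hmem σ.1 σ.2),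
          σ.1.subtypeEquiv (fun x => not_congr (hmem σ.1 σ.2 x)))
        invFun := fun ef => ⟨Equiv.subtypeCongr ef.1 ef.2, ?_⟩
        left_inv := ?_, right_inv := ?_ }
    · apply Finset.eq_of_subset_of_card_le
      · intro y hy
        obtain ⟨x, hx, rfl⟩ := Finset.mem_image.1 hy
        rw [subtypeCongr_apply_mem _ _ _ hx]
        exact (ef.1 ⟨x, hx⟩).2
      · rw [Finset.card_image_of_injective _ (Equiv.injective _), h]
    · rintro ⟨σ, hσ⟩
      ext x
      by_cases hx : x ∈ T
      · simp [subtypeCongr_apply_mem _ _ _ hx]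
      · simp [subtypeCongr_apply_notMem _ _ _ hx]
    · rintro ⟨e, f⟩
      refine Prod.ext ?_ ?_
      · ext x; simp [subtypeCongr_apply_mem _ _ _ x.2]
      · ext x; simp [subtypeCongr_apply_notMem _ _ _ x.2]
  have hcard := Fintype.card_congr key
  rw [Fintype.card_subtype] at hcard
  rw [hcard]
  have e1 : ({x // x ∈ T} ≃ {x // x ∈ B}) := Fintype.equivOfCardEq (by simp [Fintype.card_coe, h])
  have e2 : ({x : Fin n // x ∉ T} ≃ {x : Fin n // x ∉ B}) := Fintype.equivOfCardEq (by
    simp [Fintype.card_subtype_compl, Fintype.card_coe, h])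
  rw [Fintype.card_prod, Fintype.card_equiv e1, Fintype.card_equiv e2,
    Fintype.card_coe, Fintype.card_subtype_compl, Fintype.card_coe, Fintype.card_fin]

lemma tailSet_subset {n : ℕ} (σ : Equiv.Perm (Fin n)) {i j : ℕ} (h : i ≤ j) :
    tailSet σ j ⊆ tailSet σ i := by
  apply Finset.image_subset_image
  intro k hk
  simp only [Finset.mem_filter, Finset.mem_univ, true_and] at *
  omega

lemma tailSet_one {n : ℕ} (σ : Equiv.Perm (Fin n)) : tailSet σ 1 = univ := by
  ext x
  simp only [tailSet, Finset.mem_image, Finset.mem_filter, Finset.mem_univ, true_and,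
    iff_true]
  exact ⟨σ.symm x, by omega, by simp⟩

lemma tailSet_top {n : ℕ} (σ : Equiv.Perm (Fin n)) : tailSet σ (n + 1) = ∅ := by
  ext x
  simp only [tailSet, Finset.mem_image, Finset.mem_filter, Finset.mem_univ, true_and,
    Finset.notMem_empty, iff_false, not_exists]
  intro k
  have := k.2
  omega

lemma card_filter_ge {n l : ℕ} (h : l ≤ n) :
    (univ.filter (fun k : Fin n => l + 1 ≤ k.1 + 1)).card = n - l := by
  rcases eq_or_lt_of_le h with rfl | hlt
  · rw [Finset.filter_eq_empty_iff.2 (fun k _ => by have := k.2; omega)]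
    simp
  · have : (univ.filter (fun k : Fin n => l + 1 ≤ k.1 + 1)) = Finset.Ici (⟨l, hlt⟩ : Fin n) := by
      ext k
      simp only [Finset.mem_filter, Finset.mem_univ, true_and, Finset.mem_Ici, Fin.le_def]
      omega
    rw [this, Fin.card_Ici]

lemma tailSet_card {n : ℕ} (σ : Equiv.Perm (Fin n)) {l : ℕ} (h : l ≤ n) :
    (tailSet σ (l + 1)).card = n - l := by
  rw [tailSet, Finset.card_image_of_injective _ σ.injective, card_filter_ge h]

/-- The number of cut sets of cardinality l, times (n-l)!·l!, equals
N_1(φ) + ... + N_l(φ); equivalently it is C(n,l)·(s_1+...+s_l)·n!/C(n,l)… i.e.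
the number of cut sets of cardinality l is C(n,l)·(s_1(φ)+...+s_l(φ)). -/
theorem card_cut_sets_eq_cumulative_signature {n : ℕ} (φ : Finset (Fin n) → Bool)
    (hmono : ∀ A B : Finset (Fin n), A ⊆ B → φ A ≤ φ B)
    (h0 : φ ∅ = false) (h1 : φ Finset.univ = true) :
    ∀ l : ℕ, l ≤ n →
      (Finset.univ.filter (fun A : Finset (Fin n) => A.card = l ∧ φ Aᶜ = false)).card
          * Nat.factorial (n - l) * Nat.factorial l =
        ∑ i ∈ Finset.Icc 1 l, Nperm n φ i := by
  intro l hl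
  classical
  have hanti : ∀ (σ : Equiv.Perm (Fin n)) {i j : ℕ}, i ≤ j →
      φ (tailSet σ i) = false → φ (tailSet σ j) = false := by
    intro σ i j hij hi
    have := hmono _ _ (tailSet_subset σ hij)
    rw [hi] at this
    cases hb : φ (tailSet σ j)
    · rfl
    · rw [hb] at this; exact absurd this (by decide)
  have hex : ∀ σ : Equiv.Perm (Fin n), ∃ j, φ (tailSet σ (j + 1)) = false :=
    fun σ => ⟨n, by rw [tailSet_top]; exact h0⟩
  set f : Equiv.Perm (Fin n) → ℕ := fun σ => Nat.find (hex σ) with hf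
  have hf_spec : ∀ σ, φ (tailSet σ (f σ + 1)) = false := fun σ => Nat.find_spec (hex σ)
  have hf_pos : ∀ σ, 1 ≤ f σ := by
    intro σ
    rcases Nat.eq_zero_or_pos (f σ) with h | h
    · exfalso
      have := hf_spec σ
      rw [h, zero_add, tailSet_one, h1] at this
      exact absurd this (by decide)
    · exact h
  have hf_true : ∀ σ, φ (tailSet σ (f σ)) = true := by
    intro σ
    have hmin := Nat.find_min (hex σ) (m := f σ - 1)
      (show f σ - 1 < f σ by have := hf_pos σ; omega)
    have heq : f σ - 1 + 1 = f σ := by have := hf_pos σ; omega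
    rw [heq] at hmin
    simpa using hmin
  -- characterization of the filter
  have hPiff : ∀ σ : Equiv.Perm (Fin n), φ (tailSet σ (l + 1)) = false ↔ f σ ≤ l := by
    intro σ
    constructor
    · exact fun h => Nat.find_le h
    · intro h
      exact hanti σ (by omega) (hf_spec σ)
  -- RHS
  have hRHS : ∑ i ∈ Finset.Icc 1 l, Nperm n φ i =
      (univ.filter (fun σ : Equiv.Perm (Fin n) => φ (tailSet σ (l + 1)) = false)).card := by
    rw [Finset.card_eq_sum_card_fiberwise (f := f) (t := Finset.Icc 1 l)
      (fun σ hσ => by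
        rw [Finset.mem_coe, Finset.mem_filter] at hσ
        exact Finset.mem_Icc.2 ⟨hf_pos σ, (hPiff σ).1 hσ.2⟩)]
    apply Finset.sum_congr rfl
    intro i hi
    rw [Finset.mem_Icc] at hi
    unfold Nperm
    congr 1
    ext σ
    simp only [Finset.filter_filter, Finset.mem_filter, Finset.mem_univ, true_and]
    constructor
    · rintro ⟨hT, hF⟩
      -- f σ = i
      have hle : f σ ≤ i := Nat.find_le hF
      have hge : i ≤ f σ := by
        by_contra hc
        push_neg at hc
        have := hanti σ (show f σ + 1 ≤ i by omega) (hf_spec σ)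
        rw [this] at hT
        exact absurd hT (by decide)
      have : f σ = i := le_antisymm hle hge
      exact ⟨(hPiff σ).2 (by omega), this⟩
    · rintro ⟨hP, rfl⟩
      exact ⟨hf_true σ, hf_spec σ⟩
  rw [hRHS]
  -- LHS
  have hLHS : (univ.filter (fun σ : Equiv.Perm (Fin n) => φ (tailSet σ (l + 1)) = false)).card =
      (Finset.univ.filter (fun A : Finset (Fin n) => A.card = l ∧ φ Aᶜ = false)).card
        * (Nat.factorial (n - l) * Nat.factorial l) := by
    rw [Finset.card_eq_sum_card_fiberwise
      (f := fun σ : Equiv.Perm (Fin n) => (tailSet σ (l + 1))ᶜ)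
      (t := Finset.univ.filter (fun A : Finset (Fin n) => A.card = l ∧ φ Aᶜ = false))
      (fun σ hσ => by
        rw [Finset.mem_coe, Finset.mem_filter] at hσ ⊢
        refine ⟨Finset.mem_univ _, ?_, ?_⟩
        · rw [Finset.card_compl, tailSet_card σ hl, Fintype.card_fin]
          omega
        · rw [compl_compl]
          exact hσ.2)]
    rw [Finset.sum_congr rfl (g := fun _ => Nat.factorial (n - l) * Nat.factorial l) ?_,
      Finset.sum_const, smul_eq_mul]
    intro A hA
    rw [Finset.mem_filter] at hA
    obtain ⟨-, hAcard, hAcut⟩ := hA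
    have hfilter : (univ.filter (fun σ : Equiv.Perm (Fin n) => φ (tailSet σ (l + 1)) = false)).filter
        (fun σ => (tailSet σ (l + 1))ᶜ = A) =
        univ.filter (fun σ : Equiv.Perm (Fin n) =>
          (univ.filter (fun k : Fin n => l + 1 ≤ k.1 + 1)).image σ = Aᶜ) := by
      ext σ
      simp only [Finset.filter_filter, Finset.mem_filter, Finset.mem_univ, true_and]
      constructor
      · rintro ⟨-, hc⟩
        rw [← hc, compl_compl]
        rfl
      · intro h
        have ht : tailSet σ (l + 1) = Aᶜ := h
        constructor
        · rw [ht]; exact hAcut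
        · rw [ht, compl_compl]
    rw [hfilter, perm_image_card _ _ (by
      rw [card_filter_ge hl, Finset.card_compl, Fintype.card_fin, hAcard]),
      card_filter_ge hl]
    have hnl : n - (n - l) = l := by omega
    rw [hnl]
  rw [hLHS, mul_assoc]
end

section
/- (Kruskal–Katona, shadow bound) Let A be a family of k distinct l-element subsets of a finite set, with k = C(n_l, l) + C(n_{l-1}, l-1) + ... + C(n_j, j) the l-cascade representation of k (n_l > ... > n_j ≥ j ≥ 1). Then the shadow ∂A = { B : |B| = l-1, B ⊂ A for some A ∈ A } satisfies |∂A| ≥ C(n_l, l-1) + C(n_{l-1}, l-2) + ... + C(n_j, j-1), and this bound is attained by some family of k l-subsets. -/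
open Finset

/-- `IsCascade l k j a` says that `a j < a (j+1) < ... < a l`, `a j ≥ j ≥ 1`,
`a` vanishes outside `[j, l]`, and `k = C(a l, l) + ... + C(a j, j)`:
the l-cascade (binomial) representation of k. -/
def IsCascade (l k : ℕ) (j : ℕ) (a : ℕ → ℕ) : Prop :=
  1 ≤ j ∧ j ≤ l ∧ (∀ t, j ≤ t → t < l → a t < a (t + 1)) ∧ j ≤ a j ∧
  (∀ t, t < j ∨ l < t → a t = 0) ∧
  k = ∑ t ∈ Finset.Icc j l, (a t).choose t


namespace KKC
variable {l j t : ℕ} {a : ℕ → ℕ}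

/-- tail t = { a (t+1), ..., a l } -/
def tail (l : ℕ) (a : ℕ → ℕ) (t : ℕ) : Finset ℕ := (Finset.Icc (t+1) l).image a

/-- piece c t = { S ∪ tail t : S ⊆ range (a t), |S| = c } -/
def piece (l : ℕ) (a : ℕ → ℕ) (c t : ℕ) : Finset (Finset ℕ) :=
  ((Finset.range (a t)).powersetCard c).image (fun S => S ∪ tail l a t)

section basic
variable (hmono : ∀ t, j ≤ t → t < l → a t < a (t + 1))

include hmono

lemma amono : ∀ t1 t2, j ≤ t1 → t1 < t2 → t2 ≤ l → a t1 < a t2 := by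
  intro t1 t2 h1 h2 h3
  induction t2 with
  | zero => omega
  | succ n ih =>
    rcases Nat.lt_or_ge t1 n with h | h
    · exact (ih (by omega) (by omega)).trans (hmono n (by omega) (by omega))
    · have : t1 = n := by omega
      subst this
      exact hmono t1 h1 (by omega)

lemma le_a_self (haj : j ≤ a j) : ∀ t, j ≤ t → t ≤ l → t ≤ a t := by
  intro t h1 h2
  induction t with
  | zero => omega
  | succ n ih =>
    rcases Nat.eq_or_lt_of_le h1 with h | h
    · exact h ▸ haj
    · have h3 := ih (by omega) (by omega)
      have h4 := hmono n (by omega) (by omega)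
      omega

omit hmono in
lemma mem_tail_iff {x : ℕ} : x ∈ tail l a t ↔ ∃ t', t < t' ∧ t' ≤ l ∧ a t' = x := by
  simp only [tail, mem_image, mem_Icc]
  constructor
  · rintro ⟨t', ⟨h1, h2⟩, rfl⟩; exact ⟨t', by omega, h2, rfl⟩
  · rintro ⟨t', h1, h2, rfl⟩; exact ⟨t', ⟨by omega, h2⟩, rfl⟩

lemma lt_of_mem_tail (hj : j ≤ t) {x : ℕ} (hx : x ∈ tail l a t) : a t < x := by
  obtain ⟨t', h1, h2, rfl⟩ := mem_tail_iff.1 hx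
  exact amono hmono t t' hj h1 h2

lemma card_tail (hj : j ≤ t) (hl : t ≤ l) : (tail l a t).card = l - t := by
  rw [tail, card_image_of_injOn, Nat.card_Icc]
  · omega
  · intro x hx y hy hxy
    simp only [mem_coe, mem_Icc] at hx hy
    by_contra hne
    rcases Nat.lt_or_ge x y with h | h
    · exact absurd hxy (Nat.ne_of_lt (amono hmono x y (by omega) h hy.2))
    · exact absurd hxy.symm (Nat.ne_of_lt (amono hmono y x (by omega) (by omega) hx.2))

omit hmono in
lemma mem_piece_iff {c t u} : u ∈ piece l a c t ↔
    ∃ S : Finset ℕ, S ⊆ Finset.range (a t) ∧ S.card = c ∧ u = S ∪ tail l a t := by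
  simp only [piece, mem_image, mem_powersetCard]
  constructor
  · rintro ⟨S, ⟨h1, h2⟩, rfl⟩; exact ⟨S, h1, h2, rfl⟩
  · rintro ⟨S, h1, h2, rfl⟩; exact ⟨S, ⟨h1, h2⟩, rfl⟩

lemma disj_S_tail (hj : j ≤ t) {S : Finset ℕ} (hS : S ⊆ Finset.range (a t)) :
    Disjoint S (tail l a t) := by
  rw [disjoint_left]
  intro x hx hx'
  have h1 := mem_range.1 (hS hx)
  have := lt_of_mem_tail hmono hj hx'
  omega

lemma card_of_mem_piece (hj : j ≤ t) (hl : t ≤ l) {c u} (hu : u ∈ piece l a c t) :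
    u.card = c + (l - t) := by
  obtain ⟨S, h1, h2, rfl⟩ := mem_piece_iff.1 hu
  rw [card_union_of_disjoint (disj_S_tail hmono hj h1), h2, card_tail hmono hj hl]

lemma card_piece (hj : j ≤ t) {c} : (piece l a c t).card = (a t).choose c := by
  rw [piece, card_image_of_injOn, card_powersetCard, card_range]
  intro S hS T hT h
  dsimp only at h
  simp only [mem_coe, mem_powersetCard] at hS hT
  have e1 : S = (S ∪ tail l a t) \ tail l a t :=
    (union_sdiff_cancel_right (disj_S_tail hmono hj hS.1)).symm
  have e2 : T = (T ∪ tail l a t) \ tail l a t :=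
    (union_sdiff_cancel_right (disj_S_tail hmono hj hT.1)).symm
  rw [e1, e2, h]

omit hmono in
lemma a_mem_of_mem_piece {t' c u} (ht' : t < t') (hl : t' ≤ l)
    (hu : u ∈ piece l a c t) : a t' ∈ u := by
  obtain ⟨S, h1, h2, rfl⟩ := mem_piece_iff.1 hu
  exact mem_union_right _ (mem_tail_iff.2 ⟨t', ht', hl, rfl⟩)

lemma a_not_mem_of_mem_piece (hj : j ≤ t) {c u} (hu : u ∈ piece l a c t) :
    a t ∉ u := by
  obtain ⟨S, h1, h2, rfl⟩ := mem_piece_iff.1 hu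
  simp only [mem_union]
  rintro (h | h)
  · have := mem_range.1 (h1 h); omega
  · have := lt_of_mem_tail hmono hj h; omega

lemma pieces_disjoint {t t' c c'} (hj : j ≤ t) (ht' : t < t') (hl : t' ≤ l) :
    Disjoint (piece l a c t) (piece l a c' t') := by
  rw [disjoint_left]
  intro u hu hu'
  exact a_not_mem_of_mem_piece hmono (le_trans hj (le_of_lt ht')) hu'
    (a_mem_of_mem_piece ht' hl hu)

end basic
end KKC


namespace KKC
variable {l j t : ℕ} {a : ℕ → ℕ}

section fam
variable (hmono : ∀ t, j ≤ t → t < l → a t < a (t + 1))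

/-- the union of the pieces over t in [j,l], with c t the size of heads in piece t -/
def fam (l j : ℕ) (a : ℕ → ℕ) (c : ℕ → ℕ) : Finset (Finset ℕ) :=
  (Finset.Icc j l).biUnion (fun t => piece l a (c t) t)

lemma mem_fam_iff {c u} : u ∈ fam l j a c ↔ ∃ t, j ≤ t ∧ t ≤ l ∧ u ∈ piece l a (c t) t := by
  simp only [fam, mem_biUnion, mem_Icc]
  constructor
  · rintro ⟨t, ⟨h1, h2⟩, h3⟩; exact ⟨t, h1, h2, h3⟩
  · rintro ⟨t, h1, h2, h3⟩; exact ⟨t, ⟨h1, h2⟩, h3⟩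

include hmono

lemma card_fam {c : ℕ → ℕ} : (fam l j a c).card = ∑ t ∈ Finset.Icc j l, (a t).choose (c t) := by
  rw [fam, card_biUnion]
  · exact Finset.sum_congr rfl fun t ht => card_piece hmono (mem_Icc.1 ht).1
  · intro t ht t' ht' hne
    rw [mem_coe, mem_Icc] at ht ht'
    rcases Nat.lt_or_ge t t' with h | h
    · exact pieces_disjoint hmono ht.1 h ht'.2
    · exact (pieces_disjoint hmono ht'.1 (by omega) ht.2).symm

lemma sized_fam {c : ℕ → ℕ} (hc : ∀ t, j ≤ t → t ≤ l → c t + (l - t) = l) {u}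
    (hu : u ∈ fam l j a c) : u.card = l := by
  obtain ⟨t, h1, h2, h3⟩ := mem_fam_iff.1 hu
  rw [card_of_mem_piece hmono h1 h2 h3, hc t h1 h2]

/-- Key recognition lemma: a set whose part above `a t1` is exactly `tail t1`
and not containing `a t1` is in `piece t1 t1`. -/
lemma mem_piece_of (hj : j ≤ t) (hl : t ≤ l) {c : ℕ} {u : Finset ℕ}
    (hcard : u.card = c + (l - t))
    (h2 : tail l a t ⊆ u) (h3 : a t ∉ u) (h4 : ∀ x ∈ u, a t < x → x ∈ tail l a t) :
    u ∈ piece l a c t := by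
  have hdisj : Disjoint (u.filter (· < a t)) (tail l a t) := by
    rw [disjoint_left]
    intro x hx hx'
    have := lt_of_mem_tail hmono hj hx'
    simp only [mem_filter] at hx
    omega
  have hu : u = u.filter (· < a t) ∪ tail l a t := by
    ext x
    simp only [mem_union, mem_filter]
    constructor
    · intro hx
      rcases Nat.lt_trichotomy x (a t) with h | h | h
      · exact Or.inl ⟨hx, h⟩
      · exact absurd (h ▸ hx) h3
      · exact Or.inr (h4 x hx h)
    · rintro (⟨h, _⟩ | h)
      · exact h
      · exact h2 h
  refine mem_piece_iff.2 ⟨u.filter (· < a t), ?_, ?_, hu⟩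
  · intro x hx; simp only [mem_filter] at hx; exact mem_range.2 hx.2
  · have := card_union_of_disjoint hdisj
    rw [← hu, hcard, card_tail hmono hj hl] at this
    omega

/-- the family `fam l j a id` is downward closed in colex among `l`-sets -/
lemma fam_closed (hjl : j ≤ l) {s u : Finset ℕ}
    (hs : s ∈ fam l j a id) (hu : u.card = l) (hlt : toColex u < toColex s) :
    u ∈ fam l j a id := by
  obtain ⟨t0, hjt0, ht0l, hp⟩ := mem_fam_iff.1 hs
  obtain ⟨S, hS, hScard, rfl⟩ := mem_piece_iff.1 hp
  obtain ⟨w, hw, hfil⟩ := Colex.lt_iff_exists_filter_lt.1 hlt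
  rw [mem_sdiff] at hw
  rcases mem_union.1 hw.1 with hwS | hwT
  · -- w ∈ S : recognize u as member of piece t0
    have hwa : w < a t0 := mem_range.1 (hS hwS)
    have hans : a t0 ∉ S ∪ tail l a t0 :=
      a_not_mem_of_mem_piece hmono hjt0 hp
    have hsub : {x ∈ u | w < x} ⊆ S ∪ tail l a t0 := by
      rw [hfil]; exact filter_subset _ _
    refine mem_fam_iff.2 ⟨t0, hjt0, ht0l,
      mem_piece_of hmono hjt0 ht0l (by simp only [id]; omega) ?_ ?_ ?_⟩
    · intro x hx
      have hx1 : a t0 < x := lt_of_mem_tail hmono hjt0 hx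
      have : x ∈ {x ∈ S ∪ tail l a t0 | w < x} := by
        simp only [mem_filter]
        exact ⟨mem_union_right _ hx, by omega⟩
      rw [← hfil] at this
      exact (mem_filter.1 this).1
    · intro hcon
      have : a t0 ∈ {x ∈ u | w < x} := mem_filter.2 ⟨hcon, hwa⟩
      exact hans (hsub this)
    · intro x hx hax
      have : x ∈ S ∪ tail l a t0 := hsub (mem_filter.2 ⟨hx, by omega⟩)
      rcases mem_union.1 this with h | h
      · have := mem_range.1 (hS h); omega
      · exact h
  · -- w ∈ tail t0 : w = a t1, recognize u as member of piece t1
    obtain ⟨t1, ht01, ht1l, rfl⟩ := mem_tail_iff.1 hwT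
    have hjt1 : j ≤ t1 := by omega
    have htt : ∀ t2, t0 < t2 → t2 ≤ l → a t1 < a t2 → t1 < t2 := by
      intro t2 h1 h2 h3
      by_contra hcon
      rcases Nat.lt_or_ge t2 t1 with h | h
      · have h5 : j ≤ t2 := le_trans hjt0 (le_of_lt h1)
        have h6 := amono hmono t2 t1 h5 h ht1l
        omega
      · have h5 : t2 = t1 := by omega
        subst h5
        omega
    have hst1 : {x ∈ S ∪ tail l a t0 | a t1 < x} = tail l a t1 := by
      ext x
      simp only [mem_filter, mem_union]
      constructor
      · rintro ⟨hx | hx, h2⟩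
        · have := mem_range.1 (hS hx)
          have := amono hmono t0 t1 hjt0 ht01 ht1l
          omega
        · obtain ⟨t2, g1, g2, rfl⟩ := mem_tail_iff.1 hx
          exact mem_tail_iff.2 ⟨t2, htt t2 g1 g2 h2, g2, rfl⟩
      · intro hx
        obtain ⟨t2, g1, g2, rfl⟩ := mem_tail_iff.1 hx
        exact ⟨Or.inr (mem_tail_iff.2 ⟨t2, by omega, g2, rfl⟩),
          amono hmono t1 t2 hjt1 g1 g2⟩
    refine mem_fam_iff.2 ⟨t1, hjt1, ht1l,
      mem_piece_of hmono hjt1 ht1l (by simp only [id]; omega) ?_ hw.2 ?_⟩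
    · rw [← hst1, ← hfil]
      exact filter_subset _ _
    · intro x hx hax
      rw [← hst1, ← hfil]
      exact mem_filter.2 ⟨hx, hax⟩

end fam
end KKC

namespace KKC
open Finset
variable {l j t : ℕ} {a : ℕ → ℕ}

section shadow
variable (hmono : ∀ t, j ≤ t → t < l → a t < a (t + 1))
include hmono

lemma amono_reflect {t1 t2 : ℕ} (hj1 : j ≤ t1) (hj2 : j ≤ t2) (ht1 : t1 ≤ l)
    (h : a t1 < a t2) : t1 < t2 := by
  by_contra hcon
  rcases Nat.lt_or_ge t2 t1 with h' | h'
  · have := amono hmono t2 t1 hj2 h' ht1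
    omega
  · have h5 : t2 = t1 := by omega
    subst h5
    omega

lemma shadow_fam (haj : j ≤ a j) (h1j : 1 ≤ j) (hjl : j ≤ l) :
    Finset.shadow (fam l j a id) = fam l j a (fun t => t - 1) := by
  ext u
  constructor
  · intro hu
    obtain ⟨s, hs, x, hx, rfl⟩ := mem_shadow_iff.1 hu
    obtain ⟨t0, hjt0, ht0l, hp⟩ := mem_fam_iff.1 hs
    obtain ⟨S, hS, hScard, rfl⟩ := mem_piece_iff.1 hp
    have hcards : (S ∪ tail l a t0).card = l := by
      rw [card_union_of_disjoint (disj_S_tail hmono hjt0 hS), hScard,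
        card_tail hmono hjt0 ht0l]
      simp only [id]
      omega
    rcases mem_union.1 hx with hxS | hxT
    · -- removed from the head : stays in piece (t0-1) t0
      have hxa : x < a t0 := mem_range.1 (hS hxS)
      have hxT : x ∉ tail l a t0 := by
        intro h; have := lt_of_mem_tail hmono hjt0 h; omega
      refine mem_fam_iff.2 ⟨t0, hjt0, ht0l, mem_piece_iff.2
        ⟨S.erase x, ?_, ?_, ?_⟩⟩
      · exact (erase_subset _ _).trans hS
      · rw [card_erase_of_mem hxS, hScard]; simp
      · rw [erase_union_distrib, erase_eq_of_notMem hxT]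
    · -- removed a tail element a t1 : lands in piece (t1-1) t1
      obtain ⟨t1, ht01, ht1l, rfl⟩ := mem_tail_iff.1 hxT
      have hjt1 : j ≤ t1 := by omega
      refine mem_fam_iff.2 ⟨t1, hjt1, ht1l,
        mem_piece_of hmono hjt1 ht1l ?_ ?_ ?_ ?_⟩
      · rw [card_erase_of_mem hx, hcards]
        simp only [id] at hScard ⊢
        omega
      · intro y hy
        have hy1 := lt_of_mem_tail hmono hjt1 hy
        obtain ⟨t2, g1, g2, rfl⟩ := mem_tail_iff.1 hy
        refine mem_erase.2 ⟨by omega, mem_union_right _ ?_⟩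
        exact mem_tail_iff.2 ⟨t2, by omega, g2, rfl⟩
      · exact notMem_erase _ _
      · intro y hy hay
        have hyu : y ∈ S ∪ tail l a t0 := mem_of_mem_erase hy
        rcases mem_union.1 hyu with h | h
        · have := mem_range.1 (hS h)
          have := amono hmono t0 t1 hjt0 ht01 ht1l
          omega
        · obtain ⟨t2, g1, g2, rfl⟩ := mem_tail_iff.1 h
          have : t1 < t2 := amono_reflect hmono hjt1 (by omega) ht1l hay
          exact mem_tail_iff.2 ⟨t2, this, g2, rfl⟩
  · intro hu
    obtain ⟨t0, hjt0, ht0l, hp⟩ := mem_fam_iff.1 hu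
    obtain ⟨S, hS, hScard, rfl⟩ := mem_piece_iff.1 hp
    have hta := le_a_self hmono haj t0 hjt0 ht0l
    have hnsub : ¬ (Finset.range (a t0) ⊆ S) := fun h =>
      absurd (card_le_card h) (by rw [card_range, hScard]; omega)
    obtain ⟨y, hyr, hyS⟩ := not_subset.1 hnsub
    have hya : y < a t0 := mem_range.1 hyr
    have hyT : y ∉ tail l a t0 := by
      intro h; have := lt_of_mem_tail hmono hjt0 h; omega
    rw [mem_shadow_iff_insert_mem]
    refine ⟨y, by simp [hyS, hyT], ?_⟩
    refine mem_fam_iff.2 ⟨t0, hjt0, ht0l, mem_piece_iff.2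
      ⟨insert y S, ?_, ?_, ?_⟩⟩
    · exact insert_subset hyr hS
    · rw [card_insert_of_notMem hyS, hScard]
      simp only [id]
      omega
    · rw [insert_union]

end shadow
end KKC


namespace KKC

section transfer
variable {α β : Type*} [DecidableEq α] [DecidableEq β] {e : α → β} {V : Finset α}

lemma image_inj_of (he : Set.InjOn e V) {s t : Finset α} (hs : s ⊆ V) (ht : t ⊆ V)
    (h : s.image e = t.image e) : s = t := by
  ext x
  constructor
  · intro hx
    have : e x ∈ t.image e := h ▸ mem_image_of_mem e hx
    obtain ⟨y, hy, hyx⟩ := mem_image.1 this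
    rwa [← he (ht hy) (hs hx) hyx]
  · intro hx
    have : e x ∈ s.image e := h.symm ▸ mem_image_of_mem e hx
    obtain ⟨y, hy, hyx⟩ := mem_image.1 this
    rwa [← he (hs hy) (ht hx) hyx]

lemma erase_image_comm (he : Set.InjOn e V) {s : Finset α} (hs : s ⊆ V) {y : α} (hy : y ∈ s) :
    (s.erase y).image e = (s.image e).erase (e y) := by
  ext z
  simp only [mem_image, mem_erase]
  constructor
  · rintro ⟨w, hw, rfl⟩
    exact ⟨fun h => hw.1 (he (hs hw.2) (hs hy) h), w, hw.2, rfl⟩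
  · rintro ⟨h1, w, hw, rfl⟩
    exact ⟨w, ⟨fun h => h1 (by rw [h]), hw⟩, rfl⟩

variable {A : Finset (Finset α)}

lemma card_image_image (he : Set.InjOn e V) (hA : ∀ s ∈ A, s ⊆ V) :
    (A.image (Finset.image e)).card = A.card :=
  card_image_of_injOn fun s hs t ht h =>
    image_inj_of he (hA s (by simpa using hs)) (hA t (by simpa using ht)) h

lemma shadow_image_image (he : Set.InjOn e V) (hA : ∀ s ∈ A, s ⊆ V) :
    Finset.shadow (A.image (Finset.image e)) = (Finset.shadow A).image (Finset.image e) := by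
  ext u
  rw [mem_shadow_iff, mem_image]
  constructor
  · rintro ⟨s', hs', x, hx, rfl⟩
    obtain ⟨s, hs, rfl⟩ := mem_image.1 hs'
    obtain ⟨y, hy, rfl⟩ := mem_image.1 hx
    refine ⟨s.erase y, mem_shadow_iff.2 ⟨s, hs, y, hy, rfl⟩, ?_⟩
    rw [erase_image_comm he (hA s hs) hy]
  · rintro ⟨v, hv, rfl⟩
    obtain ⟨s, hs, y, hy, rfl⟩ := mem_shadow_iff.1 hv
    refine ⟨s.image e, mem_image_of_mem _ hs, e y, mem_image_of_mem e hy, ?_⟩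
    rw [erase_image_comm he (hA s hs) hy]

lemma card_shadow_image_image (he : Set.InjOn e V) (hA : ∀ s ∈ A, s ⊆ V) :
    (Finset.shadow (A.image (Finset.image e))).card = (Finset.shadow A).card := by
  rw [shadow_image_image he hA]
  refine card_image_image he ?_
  intro s hs
  obtain ⟨v, hv, y, hy, rfl⟩ := mem_shadow_iff.1 hs
  exact (erase_subset _ _).trans (hA v hv)

end transfer
end KKC

namespace KKC
open Finset
variable {l j t : ℕ} {a : ℕ → ℕ}

lemma fam_subset_range (hmono : ∀ t, j ≤ t → t < l → a t < a (t + 1)) {c : ℕ → ℕ}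
    {u : Finset ℕ} (hu : u ∈ fam l j a c) : u ⊆ Finset.range (a l + 1) := by
  obtain ⟨t0, h1, h2, hp⟩ := mem_fam_iff.1 hu
  obtain ⟨S, hS, hScard, rfl⟩ := mem_piece_iff.1 hp
  have hal : ∀ t', j ≤ t' → t' ≤ l → a t' ≤ a l := by
    intro t' g1 g2
    rcases Nat.eq_or_lt_of_le g2 with h | h
    · exact h ▸ le_rfl
    · exact le_of_lt (amono hmono t' l g1 h le_rfl)
  intro x hx
  rw [mem_range]
  rcases mem_union.1 hx with h | h
  · have := mem_range.1 (hS h)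
    have := hal t0 h1 h2
    omega
  · obtain ⟨t2, g1, g2, rfl⟩ := mem_tail_iff.1 h
    have := hal t2 (by omega) g2
    omega

end KKC

attribute [-instance] instDecidableEqFin


/-- Kruskal–Katona shadow bound: if A is a family of k distinct l-subsets and
k = C(n_l,l)+...+C(n_j,j) is the l-cascade representation of k, then the shadow
of A has at least C(n_l,l-1)+...+C(n_j,j-1) members, and this bound is attained
by some family of k l-subsets. -/
theorem kruskal_katona_shadow (k l j : ℕ) (a : ℕ → ℕ) (hk : 0 < k)
    (hcas : IsCascade l k j a) :
    (∀ {α : Type} [DecidableEq α] (A : Finset (Finset α)),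
      (∀ s ∈ A, s.card = l) → A.card = k →
        ∑ t ∈ Finset.Icc j l, (a t).choose (t - 1) ≤ (Finset.shadow A).card) ∧
    (∃ B : Finset (Finset ℕ), (∀ s ∈ B, s.card = l) ∧ B.card = k ∧
      (Finset.shadow B).card = ∑ t ∈ Finset.Icc j l, (a t).choose (t - 1)) := by
  obtain ⟨h1j, hjl, hmono, haj, hzero, hsum⟩ := hcas
  set B := KKC.fam l j a id with hB
  have hBsized : ∀ s ∈ B, s.card = l := fun s hs =>
    KKC.sized_fam hmono (fun t h1 h2 => by simp only [id]; omega) hs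
  have hBcard : B.card = k := by
    rw [hB, KKC.card_fam hmono]
    simp only [id]
    exact hsum.symm
  have hBshadow : (Finset.shadow B).card = ∑ t ∈ Finset.Icc j l, (a t).choose (t - 1) := by
    rw [hB, KKC.shadow_fam hmono haj h1j hjl, KKC.card_fam hmono]
  refine ⟨?_, B, hBsized, hBcard, hBshadow⟩
  intro α _ A hAsized hAcard
  classical
  set V := A.sup id with hV
  have hAV : ∀ s ∈ A, s ⊆ V := fun s hs => le_sup (f := id) hs
  set N := a l + 1 with hN
  set n := V.card + N with hn
  have hNn : N ≤ n := by omega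
  have hVn : V.card ≤ n := by omega
  have hnpos : 0 < n := by omega
  -- the embedding of the support of A into Fin n
  set e : α → Fin n := fun x =>
    if h : x ∈ V then Fin.castLE hVn (V.equivFin ⟨x, h⟩) else ⟨0, hnpos⟩ with he_def
  have he : Set.InjOn e V := by
    intro x hx y hy hxy
    rw [mem_coe] at hx hy
    simp only [he_def, dif_pos (mem_coe.1 hx), dif_pos (mem_coe.1 hy)] at hxy
    have h2 := V.equivFin.injective (Fin.castLE_injective hVn hxy)
    exact congrArg Subtype.val h2
  set A' := A.image (Finset.image e) with hA'
  have hA'card : A'.card = k := by rw [hA', KKC.card_image_image he hAV, hAcard]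
  have hA'sized : (A' : Set (Finset (Fin n))).Sized l := by
    intro s hs
    obtain ⟨s0, hs0, rfl⟩ := mem_image.1 (mem_coe.1 hs)
    rw [card_image_of_injOn (he.mono (by exact_mod_cast hAV s0 hs0)), hAsized s0 hs0]
  have hA'shadow : (Finset.shadow A').card = (Finset.shadow A).card :=
    KKC.card_shadow_image_image he hAV
  -- the clamping map ℕ → Fin n
  set g : ℕ → Fin n := fun m => ⟨min m (n - 1), by omega⟩ with hg_def
  have hgv : ∀ m, m < n → (g m : ℕ) = m := by
    intro m hm
    simp only [hg_def]
    omega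
  have hvg : ∀ x : Fin n, g (x : ℕ) = x := by
    intro x
    have := x.isLt
    exact Fin.ext (by simp only [hg_def]; omega)
  have hg : Set.InjOn g (Finset.range N) := by
    intro x hx y hy hxy
    rw [mem_coe] at hx hy
    have hx' := mem_range.1 (mem_coe.1 hx)
    have hy' := mem_range.1 (mem_coe.1 hy)
    have := congrArg Fin.val hxy
    rw [hgv x (by omega), hgv y (by omega)] at this
    exact this
  have hBN : ∀ s ∈ B, s ⊆ Finset.range N := fun s hs => KKC.fam_subset_range hmono hs
  set B' := B.image (Finset.image g) with hB'
  have hB'card : B'.card = k := by rw [hB', KKC.card_image_image hg hBN, hBcard]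
  have hB'shadow : (Finset.shadow B').card = ∑ t ∈ Finset.Icc j l, (a t).choose (t - 1) := by
    rw [hB', KKC.card_shadow_image_image hg hBN, hBshadow]
  have hB'init : Finset.Colex.IsInitSeg B' l := by
    constructor
    · intro s hs
      obtain ⟨s0, hs0, rfl⟩ := mem_image.1 (mem_coe.1 hs)
      rw [card_image_of_injOn (hg.mono (by exact_mod_cast hBN s0 hs0)), hBsized s0 hs0]
    · rintro s' t' hs' ⟨hlt, htcard⟩
      obtain ⟨s, hs, rfl⟩ := mem_image.1 hs'
      set t : Finset ℕ := t'.image Fin.val with ht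
      have h1 : t.card = l := by
        rw [ht, card_image_of_injective _ Fin.val_injective, htcard]
      have h2 : (s.image g).image Fin.val = s := by
        ext x
        simp only [mem_image]
        constructor
        · rintro ⟨y, ⟨z, hz, rfl⟩, rfl⟩
          rwa [hgv z (by have := mem_range.1 (hBN s hs hz); omega)]
        · intro hx
          exact ⟨g x, ⟨x, hx, rfl⟩, hgv x (by have := mem_range.1 (hBN s hs hx); omega)⟩
      have h3 : toColex t < toColex s := by
        rw [← h2, ht]
        exact (Colex.toColex_image_lt_toColex_image Fin.val_strictMono).2 hlt
      have h4 : t ∈ B := KKC.fam_closed hmono hjl hs h1 h3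
      refine mem_image.2 ⟨t, h4, ?_⟩
      rw [ht, image_image]
      rw [show (g ∘ Fin.val) = id from funext hvg]
      exact image_id
  calc ∑ t ∈ Finset.Icc j l, (a t).choose (t - 1) = (Finset.shadow B').card := hB'shadow.symm
    _ ≤ (Finset.shadow A').card := by
        refine Finset.kruskal_katona hA'sized ?_ hB'init
        omega
    _ = (Finset.shadow A).card := hA'shadow
end

section
/- (Kruskal–Katona, f-vector characterization) A vector (f_1, ..., f_n) of nonnegative integers is the f-vector of a simplicial complex on n vertices (f_l = number of faces of cardinality l) if and only if f_l ≤ C(n, l) for all l and, for each l with 2 ≤ l ≤ n and f_l > 0, writing f_l = C(n_l, l) + ... + C(n_j, j) as its l-cascade representation, one has f_{l-1} ≥ C(n_l, l-1) + ... + C(n_j, j-1). -/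
open Finset

section KKAux
open Finset.Colex
open scoped FinsetFamily

/-- Hockey-stick style identity. -/
lemma kkAux_choose_sum (m : ℕ) : ∀ j : ℕ,
    1 + ∑ i ∈ Icc 1 j, (m + i - 1).choose i = (m + j).choose j := by
  intro j
  induction j with
  | zero => simp
  | succ j ih =>
    rw [Finset.sum_Icc_succ_top (by omega), ← add_assoc, ih]
    have h1 : m + (j + 1) - 1 = m + j := by omega
    rw [h1]
    rw [show m + (j+1) = (m+j) + 1 by omega, Nat.choose_succ_succ (m+j) j]

/-- Chained strict monotonicity from adjacent steps. -/
lemma kkAux_mono {α : Type*} [Preorder α] {l : ℕ} {g : ℕ → α}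
    (hg : ∀ i, 1 ≤ i → i < l → g i < g (i + 1)) :
    ∀ i i', 1 ≤ i → i < i' → i' ≤ l → g i < g i' := by
  intro i i' hi hii' hl
  induction i' with
  | zero => omega
  | succ i' ih =>
    rcases Nat.lt_or_ge i i' with h | h
    · exact (ih (by omega) (by omega)).trans (hg i' (by omega) (by omega))
    · have : i = i' := by omega
      subst this
      exact hg i hi (by omega)

lemma kkAux_initSeg_empty {α : Type*} [LinearOrder α] [Fintype α] :
    initSeg (∅ : Finset α) = {∅} := by
  ext t
  simp only [mem_initSeg, card_empty, mem_singleton]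
  constructor
  · rintro ⟨h, -⟩; exact (card_eq_zero.1 h.symm)
  · rintro rfl; simp

lemma kkAux_card_initSeg_step {n : ℕ} (s : Finset (Fin n)) (hs : s.Nonempty) :
    #(initSeg s) = (s.max' hs : ℕ).choose #s + #(initSeg (s.erase (s.max' hs))) := by
  classical
  set m := s.max' hs with hm
  have hmem : m ∈ s := s.max'_mem hs
  have hmax : ∀ x ∈ s, x ≤ m := fun x hx => s.le_max' x hx
  have hmax' : ∀ x ∈ s.erase m, x < m := fun x hx =>
    lt_of_le_of_ne (hmax x (mem_of_mem_erase hx)) (ne_of_mem_erase hx)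
  have key : initSeg s = powersetCard #s (Iio m) ∪ (initSeg (s.erase m)).image (insert m) := by
    ext t
    simp only [mem_initSeg, mem_union, mem_powersetCard, mem_image]
    constructor
    · rintro ⟨hcard, hle⟩
      by_cases hmt : m ∈ t
      · right
        refine ⟨t.erase m, ?_, insert_erase hmt⟩
        constructor
        · rw [card_erase_of_mem hmem, card_erase_of_mem hmt, hcard]
        · rw [erase_eq, erase_eq]
          exact (toColex_sdiff_le_toColex_sdiff (singleton_subset_iff.2 hmt)
            (singleton_subset_iff.2 hmem)).2 hle
      · left
        refine ⟨fun x hx => ?_, hcard.symm⟩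
        rw [mem_Iio]
        exact lt_of_le_of_ne (forall_le_mono hle hmax x hx)
          (fun h => hmt (h ▸ hx))
    · rintro (⟨hsub, hcard⟩ | ⟨t', ht', rfl⟩)
      · refine ⟨hcard.symm, le_of_lt ?_⟩
        rw [toColex_lt_toColex_iff_exists_forall_lt]
        exact ⟨m, hmem, fun h => absurd (hsub h) (by simp), fun b hb _ => mem_Iio.1 (hsub hb)⟩
      · obtain ⟨hcard', hle'⟩ := ht'
        have hmt' : m ∉ t' := fun h =>
          lt_irrefl m (forall_lt_mono hle' hmax' m h)
        constructor
        · rw [card_insert_of_notMem hmt', ← hcard', card_erase_of_mem hmem]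
          have : 1 ≤ #s := card_pos.2 hs
          omega
        · have h1 : insert m t' \ {m} = t' := by
            rw [← erase_eq, erase_insert hmt']
          have h2 : insert m (s.erase m) = s := insert_erase hmem
          have := (toColex_sdiff_le_toColex_sdiff
            (singleton_subset_iff.2 (mem_insert_self m t'))
            (singleton_subset_iff.2 hmem)).1
          apply this
          rw [h1, ← erase_eq]
          exact hle'
  rw [key, card_union_of_disjoint, card_powersetCard, Fin.card_Iio,
    card_image_of_injOn]
  · intro t1 ht1 t2 ht2 h
    rw [mem_coe, mem_initSeg] at ht1 ht2
    have hm1 : m ∉ t1 := fun h' => lt_irrefl m (forall_lt_mono ht1.2 hmax' m h')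
    have hm2 : m ∉ t2 := fun h' => lt_irrefl m (forall_lt_mono ht2.2 hmax' m h')
    rw [← erase_insert hm1, ← erase_insert hm2, h]
  · rw [disjoint_left]
    rintro t ht ht'
    rw [mem_powersetCard] at ht
    rw [mem_image] at ht'
    obtain ⟨t', -, rfl⟩ := ht'
    have := ht.1 (mem_insert_self m t')
    simp at this


lemma kkAux_injOn {n l : ℕ} {g : ℕ → Fin n}
    (hg : ∀ i, 1 ≤ i → i < l → g i < g (i + 1)) :
    Set.InjOn g (Icc 1 l) := by
  intro i hi i' hi' h
  simp only [coe_Icc, Set.mem_Icc] at hi hi'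
  by_contra hne
  rcases Nat.lt_or_ge i i' with hlt | hge
  · exact absurd h (ne_of_lt (kkAux_mono hg i i' hi.1 hlt hi'.2))
  · exact absurd h.symm (ne_of_lt (kkAux_mono hg i' i hi'.1 (by omega) hi.2))

lemma kkAux_card_image {n l : ℕ} {g : ℕ → Fin n}
    (hg : ∀ i, 1 ≤ i → i < l → g i < g (i + 1)) :
    #((Icc 1 l).image g) = l := by
  rw [card_image_of_injOn (by exact_mod_cast kkAux_injOn hg), Nat.card_Icc]; omega

lemma kkAux_card_initSeg {n : ℕ} : ∀ (l : ℕ) (g : ℕ → Fin n),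
    (∀ i, 1 ≤ i → i < l → g i < g (i + 1)) →
    #(initSeg ((Icc 1 l).image g)) = 1 + ∑ i ∈ Icc 1 l, (g i : ℕ).choose i := by
  intro l
  induction l with
  | zero =>
    intro g hg
    simp [kkAux_initSeg_empty]
  | succ l ih =>
    intro g hg
    have hicc : Icc 1 (l + 1) = insert (l + 1) (Icc 1 l) := by
      exact (Finset.insert_Icc_right_eq_Icc_add_one (by omega)).symm
    have hnotmem : g (l + 1) ∉ (Icc 1 l).image g := by
      rw [mem_image]
      rintro ⟨i, hi, h⟩
      rw [mem_Icc] at hi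
      exact absurd h (ne_of_lt (kkAux_mono hg i (l+1) hi.1 (by omega) le_rfl))
    set s := (Icc 1 (l+1)).image g with hsdef
    have hins : s = insert (g (l+1)) ((Icc 1 l).image g) := by
      rw [hsdef, hicc, image_insert]
    have hs : s.Nonempty := by
      rw [hins]; exact insert_nonempty _ _
    have hcards : #s = l + 1 := kkAux_card_image hg
    have hmax : s.max' hs = g (l + 1) := by
      apply le_antisymm
      · apply max'_le
        intro y hy
        rw [hsdef, mem_image] at hy
        obtain ⟨i, hi, rfl⟩ := hy
        rw [mem_Icc] at hi
        rcases Nat.lt_or_ge i (l+1) with h | h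
        · exact le_of_lt (kkAux_mono hg i (l+1) hi.1 h le_rfl)
        · have : i = l + 1 := by omega
          subst this; exact le_rfl
      · apply le_max'
        rw [hsdef, mem_image]
        exact ⟨l+1, by simp, rfl⟩
    have herase : s.erase (g (l+1)) = (Icc 1 l).image g := by
      rw [hins, erase_insert hnotmem]
    rw [kkAux_card_initSeg_step s hs, hmax, hcards, herase,
      ih g (fun i h1 h2 => hg i h1 (by omega)),
      Finset.sum_Icc_succ_top (by omega : 1 ≤ l + 1)]
    omega

lemma kkAux_min' {n l : ℕ} {g : ℕ → Fin n} (hl : 1 ≤ l)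
    (hg : ∀ i, 1 ≤ i → i < l → g i < g (i + 1))
    (hs : ((Icc 1 l).image g).Nonempty) :
    ((Icc 1 l).image g).min' hs = g 1 := by
  apply le_antisymm
  · apply min'_le
    rw [mem_image]
    exact ⟨1, by simp [hl], rfl⟩
  · apply le_min'
    intro y hy
    rw [mem_image] at hy
    obtain ⟨i, hi, rfl⟩ := hy
    rw [mem_Icc] at hi
    rcases Nat.lt_or_ge 1 i with h | h
    · exact le_of_lt (kkAux_mono hg 1 i le_rfl h hi.2)
    · have : i = 1 := by omega
      subst this; exact le_rfl

lemma kkAux_erase_min {n l : ℕ} {g : ℕ → Fin n} (hl : 1 ≤ l)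
    (hg : ∀ i, 1 ≤ i → i < l → g i < g (i + 1)) :
    ((Icc 1 l).image g).erase (g 1) = (Icc 1 (l - 1)).image (fun i => g (i + 1)) := by
  ext x
  simp only [mem_erase, mem_image, mem_Icc]
  constructor
  · rintro ⟨hne, i, hi, rfl⟩
    have hi1 : i ≠ 1 := fun h => hne (by rw [h])
    exact ⟨i - 1, by omega, by rw [show i - 1 + 1 = i by omega]⟩
  · rintro ⟨i, hi, rfl⟩
    refine ⟨ne_of_gt (kkAux_mono hg 1 (i+1) le_rfl (by omega) (by omega)), i + 1, by omega, rfl⟩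


lemma kkAux_CC1 {n l j : ℕ} {g : ℕ → Fin n} {a : ℕ → ℕ}
    (hj1 : 1 ≤ j) (hjl : j ≤ l)
    (hg : ∀ i, 1 ≤ i → i < l → g i < g (i + 1))
    (hblock : ∀ i, 1 ≤ i → i ≤ j → (g i : ℕ) = (g 1 : ℕ) + i - 1)
    (haj : a j = (g 1 : ℕ) + j)
    (hatop : ∀ t, j < t → t ≤ l → a t = (g t : ℕ)) :
    #(initSeg ((Icc 1 l).image g)) = ∑ t ∈ Icc j l, (a t).choose t := by
  rw [kkAux_card_initSeg l g hg]
  have hIoc : ∀ b : ℕ, Icc 1 b = Ioc 0 b := by intro b; ext x; simp; omega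
  have hsplit : ∑ i ∈ Icc 1 l, ((g i : ℕ)).choose i
      = ∑ i ∈ Icc 1 j, ((g i : ℕ)).choose i + ∑ i ∈ Ioc j l, ((g i : ℕ)).choose i := by
    rw [hIoc l, hIoc j]
    exact (Finset.sum_Ioc_consecutive _ (Nat.zero_le j) hjl).symm
  have hblocksum : ∑ i ∈ Icc 1 j, ((g i : ℕ)).choose i
      = ∑ i ∈ Icc 1 j, ((g 1 : ℕ) + i - 1).choose i := by
    apply Finset.sum_congr rfl
    intro i hi
    rw [mem_Icc] at hi
    rw [hblock i hi.1 hi.2]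
  have hkey := kkAux_choose_sum (g 1 : ℕ) j
  have htop : ∑ i ∈ Ioc j l, ((g i : ℕ)).choose i = ∑ i ∈ Ioc j l, (a i).choose i := by
    apply Finset.sum_congr rfl
    intro i hi
    rw [mem_Ioc] at hi
    rw [hatop i hi.1 hi.2]
  rw [Finset.Icc_eq_cons_Ioc hjl, Finset.sum_cons, haj]
  omega

lemma kkAux_CC2 {n l j : ℕ} {g : ℕ → Fin n} {a : ℕ → ℕ}
    (hj1 : 1 ≤ j) (hjl : j ≤ l)
    (hg : ∀ i, 1 ≤ i → i < l → g i < g (i + 1))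
    (hblock : ∀ i, 1 ≤ i → i ≤ j → (g i : ℕ) = (g 1 : ℕ) + i - 1)
    (haj : a j = (g 1 : ℕ) + j)
    (hatop : ∀ t, j < t → t ≤ l → a t = (g t : ℕ))
    (hne : ((Icc 1 l).image g).Nonempty) :
    #(initSeg (((Icc 1 l).image g).erase (((Icc 1 l).image g).min' hne)))
      = ∑ t ∈ Icc j l, (a t).choose (t - 1) := by
  have hl : 1 ≤ l := le_trans hj1 hjl
  rw [kkAux_min' hl hg hne, kkAux_erase_min hl hg]
  have hIoc : ∀ b : ℕ, Icc 1 b = Ioc 0 b := by intro b; ext x; simp; omega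
  have hg' : ∀ i, 1 ≤ i → i < l - 1 → g (i + 1) < g (i + 1 + 1) :=
    fun i h1 h2 => hg (i + 1) (by omega) (by omega)
  rw [kkAux_card_initSeg (l - 1) (fun i => g (i + 1)) hg']
  have hsplit : ∑ i ∈ Icc 1 (l - 1), ((g (i + 1) : ℕ)).choose i
      = ∑ i ∈ Icc 1 (j - 1), ((g (i + 1) : ℕ)).choose i
        + ∑ i ∈ Ioc (j - 1) (l - 1), ((g (i + 1) : ℕ)).choose i := by
    rw [hIoc (l - 1), hIoc (j - 1)]
    exact (Finset.sum_Ioc_consecutive _ (Nat.zero_le (j - 1)) (by omega)).symm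
  have hblocksum : ∑ i ∈ Icc 1 (j - 1), ((g (i + 1) : ℕ)).choose i
      = ∑ i ∈ Icc 1 (j - 1), ((g 1 : ℕ) + 1 + i - 1).choose i := by
    apply Finset.sum_congr rfl
    intro i hi
    rw [mem_Icc] at hi
    rw [hblock (i + 1) (by omega) (by omega)]
    congr 1
    omega
  have hkey := kkAux_choose_sum ((g 1 : ℕ) + 1) (j - 1)
  have hkey2 : (g 1 : ℕ) + 1 + (j - 1) = a j := by rw [haj]; omega
  rw [hkey2] at hkey
  have htop : ∑ i ∈ Ioc (j - 1) (l - 1), ((g (i + 1) : ℕ)).choose i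
      = ∑ t ∈ Ioc j l, (a t).choose (t - 1) := by
    rw [show Ioc j l = (Ioc (j - 1) (l - 1)).image (· + 1) by
      rw [Finset.image_add_right_Ioc]
      congr 1 <;> omega]
    rw [Finset.sum_image (by intro x _ y _ h; simp only at h; omega)]
    apply Finset.sum_congr rfl
    intro i hi
    rw [mem_Ioc] at hi
    rw [hatop (i + 1) (by omega) (by omega), Nat.add_sub_cancel]
  rw [Finset.Icc_eq_cons_Ioc hjl, Finset.sum_cons]
  omega

lemma kkAux_initSeg_subset {n : ℕ} {u v : Finset (Fin n)} (hcard : #u = #v)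
    (h : #(initSeg u) ≤ #(initSeg v)) : initSeg u ⊆ initSeg v := by
  rcases le_total (toColex u) (toColex v) with huv | hvu
  · intro t ht
    rw [mem_initSeg] at ht ⊢
    exact ⟨hcard ▸ ht.1, ht.2.trans huv⟩
  · have hsub : initSeg v ⊆ initSeg u := by
      intro t ht
      rw [mem_initSeg] at ht ⊢
      exact ⟨hcard.symm ▸ ht.1, ht.2.trans hvu⟩
    rw [eq_of_subset_of_card_le hsub h]

lemma kkAux_initSeg_card_le {n : ℕ} (A : Finset (Fin n)) :
    #(initSeg A) ≤ n.choose #A := by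
  have hsub : initSeg A ⊆ powersetCard #A (univ : Finset (Fin n)) := by
    intro t ht
    rw [mem_initSeg] at ht
    rw [mem_powersetCard]
    exact ⟨subset_univ t, ht.1.symm⟩
  calc #(initSeg A) ≤ #(powersetCard #A (univ : Finset (Fin n))) := card_le_card hsub
    _ = n.choose #A := by rw [card_powersetCard, card_univ, Fintype.card_fin]

lemma kkAux_exists {n l k : ℕ} (hln : l ≤ n) (hk1 : 1 ≤ k) (hk : k ≤ n.choose l) :
    ∃ s : Finset (Fin n), #s = l ∧ #(initSeg s) = k := by
  have hC : 1 ≤ n.choose l := le_trans hk1 hk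
  have key := Finset.surj_on_of_inj_on_of_card_le
    (s := powersetCard l (univ : Finset (Fin n))) (t := Icc 1 (n.choose l))
    (fun A _ => #(initSeg A))
    (fun A hA => by
      rw [mem_powersetCard] at hA
      rw [mem_Icc]
      refine ⟨card_pos.2 initSeg_nonempty, ?_⟩
      calc #(initSeg A) ≤ n.choose #A := kkAux_initSeg_card_le A
        _ = n.choose l := by rw [hA.2])
    (fun A₁ A₂ hA₁ hA₂ heq => by
      rw [mem_powersetCard] at hA₁ hA₂
      have hc : #A₁ = #A₂ := by rw [hA₁.2, hA₂.2]
      have h1 : initSeg A₁ ⊆ initSeg A₂ := kkAux_initSeg_subset hc heq.le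
      have h2 : initSeg A₂ ⊆ initSeg A₁ := kkAux_initSeg_subset hc.symm heq.ge
      have hm1 : A₁ ∈ initSeg A₂ := h1 mem_initSeg_self
      have hm2 : A₂ ∈ initSeg A₁ := h2 mem_initSeg_self
      rw [mem_initSeg] at hm1 hm2
      have := le_antisymm hm1.2 hm2.2
      exact toColex_inj.1 this)
    (by
      rw [Nat.card_Icc, card_powersetCard, card_univ, Fintype.card_fin]
      omega)
  obtain ⟨A, hA, hAk⟩ := key k (mem_Icc.2 ⟨hk1, hk⟩)
  rw [mem_powersetCard] at hA
  exact ⟨A, hA.2, hAk.symm⟩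


/-- gaps accumulate for strictly increasing nat sequences -/
lemma kkAux_gap {j l : ℕ} {a : ℕ → ℕ}
    (ha : ∀ t, j ≤ t → t < l → a t < a (t + 1)) :
    ∀ t t', j ≤ t → t ≤ t' → t' ≤ l → a t + (t' - t) ≤ a t' := by
  intro t t' ht htt' ht'
  induction t' with
  | zero =>
    have ht0 : t = 0 := by omega
    subst ht0; simp
  | succ t' ih =>
    rcases Nat.lt_or_ge t (t' + 1) with h | h
    · have h1 := ih (by omega) (by omega)
      have h2 := ha t' (by omega) (by omega)
      omega
    · have : t = t' + 1 := by omega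
      subst this; omega

lemma kkAux_forward {n l : ℕ} {f : ℕ → ℕ} (K : Finset (Finset (Fin n)))
    (hdc : ∀ A ∈ K, ∀ B : Finset (Fin n), B ⊆ A → B ∈ K)
    (hcount : ∀ l ∈ Finset.Icc 1 n, #(K.filter (fun A => #A = l)) = f l)
    (hl2 : 2 ≤ l) (hln : l ≤ n) (hfl : 0 < f l)
    (j : ℕ) (a : ℕ → ℕ) (hc : IsCascade l (f l) j a) :
    ∑ t ∈ Finset.Icc j l, (a t).choose (t - 1) ≤ f (l - 1) := by
  classical
  obtain ⟨hj1, hjl, hmono, haj, hzero, hsum⟩ := hc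
  have hgap := kkAux_gap hmono
  have hn : 0 < n := by omega
  -- f l ≤ choose n l
  have hflle : f l ≤ n.choose l := by
    rw [← hcount l (mem_Icc.2 ⟨by omega, hln⟩)]
    have hsub : K.filter (fun A => #A = l) ⊆ powersetCard l (univ : Finset (Fin n)) := by
      intro A hA
      rw [mem_powersetCard]
      exact ⟨subset_univ A, (mem_filter.1 hA).2⟩
    calc #(K.filter (fun A => #A = l)) ≤ #(powersetCard l (univ : Finset (Fin n))) :=
          card_le_card hsub
      _ = n.choose l := by rw [card_powersetCard, card_univ, Fintype.card_fin]
  -- sum decomposition facts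
  have hsum_ge_top : (a l).choose l ≤ f l := by
    rw [hsum]
    exact Finset.single_le_sum (f := fun t => (a t).choose t)
      (fun t _ => Nat.zero_le _) (mem_Icc.2 ⟨hjl, le_rfl⟩)
  have hal_le : a l ≤ n := by
    by_contra h
    push_neg at h
    have h1 : n.choose l < (n + 1).choose l := by
      have he : (n + 1).choose l = n.choose (l - 1) + n.choose l := by
        rw [show l = (l - 1) + 1 by omega, Nat.choose_succ_succ]
        simp
      have : 0 < n.choose (l - 1) := Nat.choose_pos (by omega)
      omega
    have h2 : (n + 1).choose l ≤ (a l).choose l := Nat.choose_le_choose l (by omega)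
    omega
  have hal_lt : j < l → a l < n := by
    intro hjl'
    by_contra h
    push_neg at h
    have hCnl : n.choose l ≤ (a l).choose l := Nat.choose_le_choose l h
    have hposj : 0 < (a j).choose j := Nat.choose_pos haj
    have : (a j).choose j + (a l).choose l ≤ f l := by
      rw [hsum, Finset.Icc_eq_cons_Ioc hjl, Finset.sum_cons]
      have : (a l).choose l ≤ ∑ t ∈ Ioc j l, (a t).choose t :=
        Finset.single_le_sum (f := fun t => (a t).choose t)
          (fun t _ => Nat.zero_le _) (mem_Ioc.2 ⟨hjl', le_rfl⟩)
      omega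
    omega
  -- the sequence
  set v : ℕ → ℕ := fun i => if i ≤ j then (a j - j) + (i - 1) else a i with hv
  have hvlt : ∀ i, 1 ≤ i → i ≤ l → v i < n := by
    intro i h1 h2
    have hajal : a j + (l - j) ≤ a l := hgap j l le_rfl hjl le_rfl
    by_cases hij : i ≤ j
    · simp only [hv, if_pos hij]
      omega
    · simp only [hv, if_neg hij]
      push_neg at hij
      rcases Nat.lt_or_ge i l with h3 | h3
      · have := hgap j i le_rfl (by omega) (by omega)
        have := hgap i l (by omega) (by omega) le_rfl
        omega
      · have : i = l := by omega
        subst this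
        exact hal_lt (by omega)
  set g : ℕ → Fin n := fun i => ⟨v i % n, Nat.mod_lt _ hn⟩ with hgdef
  have hgval : ∀ i, 1 ≤ i → i ≤ l → (g i : ℕ) = v i := by
    intro i h1 h2
    simp only [hgdef]
    exact Nat.mod_eq_of_lt (hvlt i h1 h2)
  have hg : ∀ i, 1 ≤ i → i < l → g i < g (i + 1) := by
    intro i h1 h2
    rw [Fin.lt_def]
    rw [hgval i h1 (by omega), hgval (i + 1) (by omega) (by omega)]
    rcases Nat.lt_or_ge i j with hij | hij
    · -- i + 1 ≤ j : both in block
      simp only [hv, if_pos (show i ≤ j by omega), if_pos (show i + 1 ≤ j by omega)]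
      omega
    · rcases Nat.eq_or_lt_of_le hij with heq | hlt
      · -- i = j
        subst heq
        have hstep := hmono j le_rfl (by omega)
        simp only [hv, if_pos (le_refl j), if_neg (show ¬ j + 1 ≤ j by omega)]
        omega
      · have hstep := hmono i (by omega) h2
        simp only [hv, if_neg (show ¬ i ≤ j by omega), if_neg (show ¬ i + 1 ≤ j by omega)]
        exact hstep
  have hg1 : (g 1 : ℕ) = a j - j := by
    rw [hgval 1 le_rfl (by omega)]
    simp only [hv, if_pos hj1]
    omega
  have hblock : ∀ i, 1 ≤ i → i ≤ j → (g i : ℕ) = (g 1 : ℕ) + i - 1 := by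
    intro i h1 h2
    rw [hgval i h1 (by omega), hg1]
    simp only [hv, if_pos h2]
    omega
  have hajv : a j = (g 1 : ℕ) + j := by rw [hg1]; omega
  have hatop : ∀ t, j < t → t ≤ l → a t = (g t : ℕ) := by
    intro t h1 h2
    rw [hgval t (by omega) h2]
    simp only [hv, if_neg (show ¬ t ≤ j by omega)]
  -- the initial segment
  set s := (Icc 1 l).image g with hsdef
  have hcs : #s = l := kkAux_card_image hg
  have hne : s.Nonempty := card_pos.1 (by omega)
  have hinit : #(initSeg s) = f l := by
    rw [hsdef, kkAux_CC1 hj1 hjl hg hblock hajv hatop, ← hsum]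
  have hshadow : #(∂ (initSeg s)) = ∑ t ∈ Finset.Icc j l, (a t).choose (t - 1) := by
    rw [Finset.Colex.shadow_initSeg hne]
    exact kkAux_CC2 hj1 hjl hg hblock hajv hatop hne
  -- Kruskal-Katona
  set 𝒜 := K.filter (fun A => #A = l) with h𝒜def
  have h𝒜 : #𝒜 = f l := hcount l (mem_Icc.2 ⟨by omega, hln⟩)
  have hsized : (𝒜 : Set (Finset (Fin n))).Sized l := fun A hA => (mem_filter.1 hA).2
  have hIS : IsInitSeg (initSeg s) l := by
    rw [← hcs]; exact isInitSeg_initSeg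
  have hKK : #(∂ (initSeg s)) ≤ #(∂ 𝒜) :=
    Finset.kruskal_katona hsized (le_of_eq (hinit.trans h𝒜.symm)) hIS
  have hsub : ∂ 𝒜 ⊆ K.filter (fun A => #A = l - 1) := by
    intro B hB
    rw [mem_shadow_iff] at hB
    obtain ⟨A, hA, x, hx, rfl⟩ := hB
    rw [mem_filter] at hA
    rw [mem_filter]
    refine ⟨hdc A hA.1 _ (erase_subset x A), ?_⟩
    rw [card_erase_of_mem hx, hA.2]
  have hfl1 : #(K.filter (fun A => #A = l - 1)) = f (l - 1) :=
    hcount (l - 1) (mem_Icc.2 ⟨by omega, by omega⟩)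
  calc ∑ t ∈ Finset.Icc j l, (a t).choose (t - 1) = #(∂ (initSeg s)) := hshadow.symm
    _ ≤ #(∂ 𝒜) := hKK
    _ ≤ #(K.filter (fun A => #A = l - 1)) := card_le_card hsub
    _ = f (l - 1) := hfl1


lemma kkAux_reverse_step {n m : ℕ} {f : ℕ → ℕ} (hm2 : 2 ≤ m) (hmn : m ≤ n)
    (s : Finset (Fin n)) (hcs : #s = m) (hfs : #(initSeg s) = f m)
    (hcasc : ∀ j a, IsCascade m (f m) j a →
      ∑ t ∈ Finset.Icc j m, (a t).choose (t - 1) ≤ f (m - 1)) :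
    ∃ u : Finset (Fin n), ∂ (initSeg s) = initSeg u ∧ #u = m - 1 ∧
      #(initSeg u) ≤ f (m - 1) ∧ 1 ≤ f (m - 1) := by
  classical
  set G := s.orderIsoOfFin hcs with hGdef
  set g : ℕ → Fin n := fun i => (G ⟨min (i - 1) (m - 1), by omega⟩ : Fin n) with hgdef
  have hg : ∀ i, 1 ≤ i → i < m → g i < g (i + 1) := by
    intro i h1 h2
    have e1 : min (i - 1) (m - 1) = i - 1 := by omega
    have e2 : min (i + 1 - 1) (m - 1) = i := by omega
    simp only [hgdef, e1, e2]
    rw [Subtype.coe_lt_coe]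
    exact G.lt_iff_lt.2 (Fin.mk_lt_mk.2 (by omega))
  have himg : (Icc 1 m).image g = s := by
    apply eq_of_subset_of_card_le
    · intro x hx
      rw [mem_image] at hx
      obtain ⟨i, -, rfl⟩ := hx
      exact (G _).2
    · rw [hcs, kkAux_card_image hg]
  have hne' : ((Icc 1 m).image g).Nonempty := by
    rw [himg]; exact card_pos.1 (by omega)
  -- the block
  set w : ℕ → ℕ := fun i => (g i : ℕ) with hwdef
  have hw : ∀ t, 1 ≤ t → t < m → w t < w (t + 1) := by
    intro t h1 h2
    exact hg t h1 h2
  have hgap := kkAux_gap hw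
  set B := (Icc 1 m).filter (fun t => w t = w 1 + t - 1) with hBdef
  have hB1 : (1 : ℕ) ∈ B := by
    rw [hBdef, mem_filter, mem_Icc]
    exact ⟨⟨le_rfl, by omega⟩, by omega⟩
  have hBne : B.Nonempty := ⟨1, hB1⟩
  have hjmem := B.max'_mem hBne
  set j := B.max' hBne with hjdef
  obtain ⟨hjIcc, hgj⟩ := mem_filter.1 hjmem
  rw [mem_Icc] at hjIcc
  obtain ⟨hj1, hjm⟩ := hjIcc
  have hblock : ∀ i, 1 ≤ i → i ≤ j → w i = w 1 + i - 1 := by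
    intro i h1 h2
    have hle1 := hgap 1 i le_rfl h1 (by omega)
    have hle2 := hgap i j h1 h2 hjm
    omega
  have hnotB : j < m → w (j + 1) ≠ w 1 + (j + 1) - 1 := by
    intro hjm' hcontra
    have : j + 1 ∈ B := by
      rw [hBdef, mem_filter, mem_Icc]
      exact ⟨⟨by omega, by omega⟩, hcontra⟩
    have := B.le_max' (j + 1) this
    omega
  set a : ℕ → ℕ := fun t => if t = j then w 1 + j else if j < t ∧ t ≤ m then w t else 0
    with hadef
  have haj : a j = w 1 + j := by simp [hadef]
  have hatop : ∀ t, j < t → t ≤ m → a t = w t := by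
    intro t h1 h2
    simp only [hadef, if_neg (show t ≠ j by omega), if_pos (And.intro h1 h2)]
  have hcasc_holds : IsCascade m (f m) j a := by
    refine ⟨hj1, hjm, ?_, ?_, ?_, ?_⟩
    · intro t ht htm
      rcases Nat.eq_or_lt_of_le ht with heq | hlt
      · rw [← heq] at htm ⊢
        rw [haj, hatop (j + 1) (by omega) (by omega)]
        have h1 := hw j (by omega) htm
        have h2 := hnotB htm
        omega
      · rw [hatop t hlt (by omega), hatop (t + 1) (by omega) (by omega)]
        exact hw t (by omega) htm
    · rw [haj]; omega
    · intro t ht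
      simp only [hadef, if_neg (show t ≠ j by omega)]
      rw [if_neg (by omega)]
    · rw [← hfs, ← himg]
      exact kkAux_CC1 hj1 hjm hg hblock haj hatop
  have hbound := hcasc j a hcasc_holds
  have hCC2 := kkAux_CC2 hj1 hjm hg hblock haj hatop hne'
  refine ⟨((Icc 1 m).image g).erase (((Icc 1 m).image g).min' hne'), ?_, ?_, ?_, ?_⟩
  · rw [← himg]
    exact Finset.Colex.shadow_initSeg hne'
  · rw [card_erase_of_mem (min'_mem _ _), kkAux_card_image hg]
  · rw [hCC2]; exact hbound
  · have h1 : 1 ≤ (a j).choose (j - 1) := Nat.choose_pos (by rw [haj]; omega)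
    have h2 : (a j).choose (j - 1) ≤ ∑ t ∈ Finset.Icc j m, (a t).choose (t - 1) :=
      Finset.single_le_sum (f := fun t => (a t).choose (t - 1))
        (fun t _ => Nat.zero_le _) (mem_Icc.2 ⟨le_rfl, hjm⟩)
    omega

/-- Kruskal–Katona f-vector characterization: (f_1,...,f_n) is the f-vector of a
simplicial complex on n vertices iff f_l ≤ C(n,l) for all l and the cascade
condition relating f_l and f_{l-1} holds. -/
theorem kruskal_katona_f_vector (n : ℕ) (f : ℕ → ℕ) :
    (∃ K : Finset (Finset (Fin n)),
      (∀ A ∈ K, ∀ B : Finset (Fin n), B ⊆ A → B ∈ K) ∧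
      (∀ l ∈ Finset.Icc 1 n, (K.filter (fun A => A.card = l)).card = f l)) ↔
    ((∀ l ∈ Finset.Icc 1 n, f l ≤ n.choose l) ∧
      (∀ l : ℕ, 2 ≤ l → l ≤ n → 0 < f l →
        ∀ (j : ℕ) (a : ℕ → ℕ), IsCascade l (f l) j a →
          ∑ t ∈ Finset.Icc j l, (a t).choose (t - 1) ≤ f (l - 1))) := by
  classical
  constructor
  · rintro ⟨K, hdc, hcount⟩
    constructor
    · intro l hl
      rw [← hcount l hl]
      have hsub : K.filter (fun A => #A = l) ⊆ powersetCard l (univ : Finset (Fin n)) := by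
        intro A hA
        rw [mem_powersetCard]
        exact ⟨subset_univ A, (mem_filter.1 hA).2⟩
      calc #(K.filter (fun A => #A = l)) ≤ #(powersetCard l (univ : Finset (Fin n))) :=
            card_le_card hsub
        _ = n.choose l := by rw [card_powersetCard, card_univ, Fintype.card_fin]
    · intro l hl2 hln hfl j a hc
      exact kkAux_forward K hdc hcount hl2 hln hfl j a hc
  · rintro ⟨hbound, hcasc⟩
    have hex : ∀ m, 1 ≤ m → m ≤ n → 1 ≤ f m →
        ∃ s : Finset (Fin n), #s = m ∧ #(initSeg s) = f m :=
      fun m h1 h2 h3 => kkAux_exists h2 h3 (hbound m (mem_Icc.2 ⟨h1, h2⟩))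
    set sf : ℕ → Finset (Fin n) := fun m =>
      if h : 1 ≤ m ∧ m ≤ n ∧ 1 ≤ f m then (hex m h.1 h.2.1 h.2.2).choose else ∅ with hsfdef
    have hsf : ∀ m, 1 ≤ m → m ≤ n → 1 ≤ f m →
        #(sf m) = m ∧ #(initSeg (sf m)) = f m := by
      intro m h1 h2 h3
      have e : sf m = (hex m h1 h2 h3).choose := by
        rw [hsfdef]
        exact dif_pos ⟨h1, h2, h3⟩
      rw [e]
      exact (hex m h1 h2 h3).choose_spec
    set K : Finset (Finset (Fin n)) :=
      insert ∅ ((Finset.Icc 1 n).biUnion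
        (fun m => if 1 ≤ f m then initSeg (sf m) else ∅)) with hKdef
    have hmemK : ∀ A, A ∈ K ↔ A = ∅ ∨ ∃ m, m ∈ Finset.Icc 1 n ∧ 1 ≤ f m ∧
        A ∈ initSeg (sf m) := by
      intro A
      rw [hKdef, mem_insert, mem_biUnion]
      constructor
      · rintro (rfl | ⟨m, hm, hA⟩)
        · exact Or.inl rfl
        · right
          by_cases hfm : 1 ≤ f m
          · rw [if_pos hfm] at hA
            exact ⟨m, hm, hfm, hA⟩
          · rw [if_neg hfm] at hA
            exact absurd hA (notMem_empty A)
      · rintro (rfl | ⟨m, hm, hfm, hA⟩)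
        · exact Or.inl rfl
        · right
          exact ⟨m, hm, by rw [if_pos hfm]; exact hA⟩
    have hcardmem : ∀ m ∈ Finset.Icc 1 n, 1 ≤ f m → ∀ A ∈ initSeg (sf m), #A = m := by
      intro m hm hfm A hA
      rw [mem_initSeg] at hA
      rw [← hA.1]
      exact (hsf m (mem_Icc.1 hm).1 (mem_Icc.1 hm).2 hfm).1
    refine ⟨K, ?_, ?_⟩
    · -- downward closed
      have key : ∀ N : ℕ, ∀ A ∈ K, #A ≤ N → ∀ B : Finset (Fin n), B ⊆ A → B ∈ K := by
        intro N
        induction N with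
        | zero =>
          intro A hA hcard B hB
          have hAe : A = ∅ := card_eq_zero.1 (by omega)
          subst hAe
          rw [subset_empty] at hB
          subst hB
          exact hA
        | succ N ih =>
          intro A hA hcard B hB
          by_cases hBA : B = A
          · subst hBA; exact hA
          · obtain ⟨x, hxA, hxB⟩ := exists_of_ssubset (Finset.ssubset_iff_subset_ne.2 ⟨hB, hBA⟩)
            have hBsub : B ⊆ A.erase x := subset_erase.2 ⟨hB, hxB⟩
            rcases (hmemK A).1 hA with rfl | ⟨m, hm, hfm, hA'⟩
            · exact absurd (subset_empty.1 hB) hBA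
            · obtain ⟨hm1, hm2⟩ := mem_Icc.1 hm
              have hcardA : #A = m := hcardmem m hm hfm A hA'
              have herase_mem : A.erase x ∈ ∂ (initSeg (sf m)) :=
                mem_shadow_iff.2 ⟨A, hA', x, hxA, rfl⟩
              have hsfm := hsf m hm1 hm2 hfm
              have herase_K : A.erase x ∈ K := by
                by_cases hm2' : 2 ≤ m
                · obtain ⟨u, hu_eq, hu_card, hu_le, hf1⟩ :=
                    kkAux_reverse_step hm2' hm2 (sf m) hsfm.1 hsfm.2
                      (fun j a hc => hcasc m hm2' hm2 (by omega) j a hc)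
                  rw [hu_eq] at herase_mem
                  have hsub2 : initSeg u ⊆ initSeg (sf (m - 1)) := by
                    apply kkAux_initSeg_subset
                    · rw [hu_card, (hsf (m - 1) (by omega) (by omega) hf1).1]
                    · rw [(hsf (m - 1) (by omega) (by omega) hf1).2]
                      exact hu_le
                  exact (hmemK _).2 (Or.inr ⟨m - 1, mem_Icc.2 ⟨by omega, by omega⟩, hf1,
                    hsub2 herase_mem⟩)
                · have hm1' : m = 1 := by omega
                  have he0 : #(A.erase x) = 0 := by
                    rw [card_erase_of_mem hxA, hcardA, hm1']
                  rw [card_eq_zero] at he0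
                  rw [he0]
                  exact (hmemK ∅).2 (Or.inl rfl)
              exact ih (A.erase x) herase_K (by rw [card_erase_of_mem hxA]; omega) B hBsub
      intro A hA B hB
      exact key #A A hA le_rfl B hB
    · -- counts
      intro l hl
      obtain ⟨h1, h2⟩ := mem_Icc.1 hl
      have hlevel : K.filter (fun A => #A = l) =
          if 1 ≤ f l then initSeg (sf l) else ∅ := by
        ext A
        rw [mem_filter]
        constructor
        · rintro ⟨hA, hcard⟩
          rcases (hmemK A).1 hA with rfl | ⟨m, hm, hfm, hA'⟩
          · exfalso
            rw [card_empty] at hcard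
            omega
          · have hAm : #A = m := hcardmem m hm hfm A hA'
            have hml : m = l := by omega
            subst hml
            rw [if_pos hfm]
            exact hA'
        · intro hA
          by_cases hfl : 1 ≤ f l
          · rw [if_pos hfl] at hA
            refine ⟨(hmemK A).2 (Or.inr ⟨l, mem_Icc.2 ⟨h1, h2⟩, hfl, hA⟩),
              hcardmem l (mem_Icc.2 ⟨h1, h2⟩) hfl A hA⟩
          · rw [if_neg hfl] at hA
            exact absurd hA (notMem_empty A)
      rw [hlevel]
      by_cases hfl : 1 ≤ f l
      · rw [if_pos hfl]
        exact (hsf l h1 h2 hfl).2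
      · rw [if_neg hfl]
        rw [card_empty]
        omega


end KKAux
end
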